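/- Let a, b, d be integers with gcd(a, b) = 1, gcd(b, 2d) = 1, b ≠ 0, d ≠ 0, and d² + 4b²d ≠ 0. Let p be a prime number with p ≡ 1 (mod 4(4b²d + d²)) and a·p ≡ 1 (mod b), and set e = (ap − 1)/b (an integer). Then there exists an integer k such that k·(k + e)·d ≡ 1 (mod p). -/
import Mathlib

theorem exists_k_modeq (a b d : ℤ)
    (hab : Int.gcd a b = 1) (hbd : Int.gcd b (2 * d) = 1)
    (hb : b ≠ 0) (hd : d ≠ 0) (hdd : d ^ 2 + 4 * b ^ 2 * d ≠ 0)
    (p : ℕ) (hp : p.Prime)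
    (hp1 : (p : ℤ) ≡ 1 [ZMOD 4 * (4 * b ^ 2 * d + d ^ 2)])
    (hap : a * (p : ℤ) ≡ 1 [ZMOD b])
    (e : ℤ) (he : b * e = a * (p : ℤ) - 1) :
    ∃ k : ℤ, k * (k + e) * d ≡ 1 [ZMOD (p : ℤ)] := by
  haveI : Fact p.Prime := ⟨hp⟩
  set m : ℤ := 4 * b ^ 2 * d + d ^ 2 with hm_def
  have hm : m ≠ 0 := by rw [hm_def]; intro h; apply hdd; linarith
  have hdvd : (4 * m) ∣ (p : ℤ) - 1 := (Int.ModEq.dvd hp1.symm)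
  have h4 : (4 : ℤ) ∣ (p : ℤ) - 1 := dvd_trans ⟨m, rfl⟩ hdvd
  have hp2 : p ≠ 2 := by rintro rfl; omega
  have hpodd : Odd p := hp.odd_of_ne_two hp2
  have hp5 : 2 ≤ p := hp.two_le
  -- p does not divide m
  have hpm : ¬ ((p : ℤ) ∣ m) := by
    intro hpd
    have h1 : (p : ℤ) ∣ (p : ℤ) - 1 := hpd.trans (dvd_trans ⟨4, by ring⟩ hdvd)
    have h2 : (p : ℤ) ∣ 1 := (dvd_sub_right (dvd_refl _)).mp (by simpa using h1)
    have := Int.le_of_dvd one_pos h2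
    omega
  -- m is a square mod p
  have hmz : ((m : ℤ) : ZMod p) ≠ 0 := by
    rw [Ne, ZMod.intCast_zmod_eq_zero_iff_dvd]
    exact hpm
  have hleg : legendreSym p m = 1 := by
    rw [jacobiSym.legendreSym.to_jacobiSym]
    rw [jacobiSym.mod_right m hpodd]
    have hn : (4 * m.natAbs) ∣ p - 1 := by
      have h1 : ((4 * m.natAbs : ℕ) : ℤ) ∣ ((p - 1 : ℕ) : ℤ) := by
        have h2 := Int.natAbs_dvd.mpr hdvd
        push_cast [Int.natAbs_mul] at h2
        push_cast [Nat.cast_sub (by omega : 1 ≤ p)]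
        exact h2
      exact_mod_cast h1
    have hlt : 1 < 4 * m.natAbs := by
      have : m.natAbs ≠ 0 := Int.natAbs_ne_zero.mpr hm
      omega
    have hmod : p % (4 * m.natAbs) = 1 := by
      obtain ⟨c, hc⟩ := hn
      have hp1' : p = 4 * m.natAbs * c + 1 := by omega
      rw [hp1', Nat.mul_add_mod, Nat.mod_eq_of_lt hlt]
    rw [hmod, jacobiSym.one_right]
  have hsq : IsSquare ((m : ℤ) : ZMod p) := (legendreSym.eq_one_iff p hmz).mp hleg
  obtain ⟨t, ht⟩ := hsq
  set B : ZMod p := ((b : ℤ) : ZMod p) with hB_def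
  set D : ZMod p := ((d : ℤ) : ZMod p) with hD_def
  set E : ZMod p := ((e : ℤ) : ZMod p) with hE_def
  have hpb : ¬ ((p : ℤ) ∣ b) := by
    intro hpd
    have h1 : (p : ℤ) ∣ 1 := by
      have hx : (p : ℤ) ∣ a * (p : ℤ) - b * e := dvd_sub (Dvd.intro_left a rfl) (hpd.mul_right e)
      rwa [he, sub_sub_cancel] at hx
    have := Int.le_of_dvd one_pos h1
    omega
  have hB : B ≠ 0 := by
    rw [hB_def, Ne, ZMod.intCast_zmod_eq_zero_iff_dvd]; exact hpb
  have hpd' : ¬ ((p : ℤ) ∣ d) := fun hpd => hpm (hpd.trans ⟨4 * b ^ 2 + d, by rw [hm_def]; ring⟩)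
  have hD : D ≠ 0 := by
    rw [hD_def, Ne, ZMod.intCast_zmod_eq_zero_iff_dvd]; exact hpd'
  have h2 : (2 : ZMod p) ≠ 0 := by
    have : ¬ ((p : ℤ) ∣ 2) := by
      intro h; have := Int.le_of_dvd two_pos h; omega
    have h2' : ((2 : ℤ) : ZMod p) ≠ 0 := by
      rw [Ne, ZMod.intCast_zmod_eq_zero_iff_dvd]; exact this
    simpa using h2'
  have hpF : ((p : ℤ) : ZMod p) = 0 := by
    simpa using (ZMod.natCast_self p)
  have hBE : B * E = -1 := by
    have := congrArg (fun x : ℤ => ((x : ZMod p))) he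
    push_cast at this
    rw [ZMod.natCast_self, mul_zero, zero_sub] at this
    exact this
  have hmF : t * t = 4 * B ^ 2 * D + D ^ 2 := by
    rw [← ht]
    show ((4 * b ^ 2 * d + d ^ 2 : ℤ) : ZMod p) = _
    push_cast
    ring
  set s : ZMod p := t * B⁻¹ with hs_def
  have hS : s ^ 2 = (D * E) ^ 2 + 4 * D := by
    have hB2 : B⁻¹ * B = 1 := inv_mul_cancel₀ hB
    have hE2 : E = -B⁻¹ := by
      field_simp
      linear_combination hBE
    rw [hs_def, hE2]
    linear_combination (B⁻¹)^2 * hmF + (4 * D * (B⁻¹ * B + 1)) * hB2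
  set k0 : ZMod p := (s - D * E) * (2 * D)⁻¹ with hk0_def
  have h2D : (2 * D) ≠ 0 := mul_ne_zero h2 hD
  have hk0 : 2 * D * k0 = s - D * E := by
    rw [hk0_def]; field_simp
  have key : (4 * D) * (k0 * (k0 + E) * D) = (4 * D) * 1 := by
    linear_combination (2 * D * k0 + s + D * E) * hk0 + hS
  have h4D : (4 : ZMod p) * D ≠ 0 := mul_ne_zero (by
    have : (4 : ZMod p) = 2 * 2 := by norm_num
    rw [this]; exact mul_ne_zero h2 h2) hD
  have hfin : k0 * (k0 + E) * D = 1 := mul_left_cancel₀ h4D key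
  obtain ⟨k, hk⟩ := ZMod.intCast_surjective k0
  refine ⟨k, ?_⟩
  have : ((k * (k + e) * d : ℤ) : ZMod p) = ((1 : ℤ) : ZMod p) := by
    push_cast
    rw [hk]
    simpa using hfin
  exact (ZMod.intCast_eq_intCast_iff _ _ _).mp this
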